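/- Let q ∈ (0,1) and let Z be a symmetric similarity matrix with all entries strictly positive. Then for every x in the interior of ℝ_+^N, the Hessian matrix M(x) of -‖·‖_{Z,q}^q at x (given by M(x) = D(x)Z + Z^⊤D(x) − (2−q)Z^⊤D'(x)Z with D(x) = diag[(Zx)_ℓ^{q−2}] and D'(x) = diag[x_ℓ(Zx)_ℓ^{q−3}]) has at least one strictly positive diagonal entry; consequently M(x) is never negative semidefinite, so ‖·‖_{Z,q}^q is never convex on ℝ_+^N when N ≥ 1. -/

import Mathlib

theorem never_convex_symmetric
    (N : ℕ) (hN : 1 ≤ N) (q : ℝ) (hq : 0 < q) (hq1 : q < 1)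
    (Z : Matrix (Fin N) (Fin N) ℝ)
    (hsym : Z.IsSymm)
    (hdiag : ∀ i, Z i i = 1)
    (hZ : ∀ i j, 0 < Z i j ∧ Z i j ≤ 1)
    (x : Fin N → ℝ) (hx : ∀ i, 0 < x i)
    (D D' M : Matrix (Fin N) (Fin N) ℝ)
    (hD : D = Matrix.diagonal fun ℓ => (Z.mulVec x ℓ) ^ (q - 2))
    (hD' : D' = Matrix.diagonal fun ℓ => x ℓ * (Z.mulVec x ℓ) ^ (q - 3))
    (hM : M = D * Z + Z.transpose * D - (2 - q) • (Z.transpose * D' * Z)) :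
    (∃ i, 0 < M i i) ∧ ¬ (-M).PosSemidef := by
  haveI : Nonempty (Fin N) := ⟨⟨0, hN⟩⟩
  set f := Z.mulVec x with hf
  have hfpos : ∀ i, 0 < f i := by
    intro i
    rw [hf]
    simp only [Matrix.mulVec, dotProduct]
    apply Finset.sum_pos
    · intro j _
      exact mul_pos (hZ i j).1 (hx j)
    · exact Finset.univ_nonempty
  -- choose i minimizing f
  obtain ⟨i, -, hi⟩ := Finset.exists_min_image Finset.univ f ⟨⟨0, hN⟩, Finset.mem_univ _⟩
  have hZsym : ∀ k l, Z k l = Z l k := fun k l => by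
    have := congrFun (congrFun hsym l) k
    simpa [Matrix.transpose_apply] using this
  -- diagonal entry computation
  have hMii : M i i = 2 * f i ^ (q - 2)
      - (2 - q) * ∑ k, Z k i * (x k * f k ^ (q - 3)) * Z k i := by
    subst hM hD hD'
    simp [Matrix.add_apply, Matrix.sub_apply, Matrix.mul_apply, Matrix.diagonal,
      Matrix.transpose_apply, Finset.mul_sum, hdiag i, Finset.sum_ite_eq,
      Finset.sum_ite_eq']
    ring_nf
  have hfi := hfpos i
  have hsum : ∑ k, Z k i * (x k * f k ^ (q - 3)) * Z k i ≤ f i ^ (q - 2) := by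
    have step1 : ∑ k, Z k i * (x k * f k ^ (q - 3)) * Z k i
        ≤ ∑ k, Z k i * x k * f i ^ (q - 3) := by
      apply Finset.sum_le_sum
      intro k _
      have h1 : f k ^ (q - 3) ≤ f i ^ (q - 3) :=
        Real.rpow_le_rpow_of_nonpos hfi (hi k (Finset.mem_univ k)) (by linarith)
      have h2 : 0 < f k ^ (q - 3) := Real.rpow_pos_of_pos (hfpos k) _
      have hzk := (hZ k i).1
      have hzk1 := (hZ k i).2
      have hxk := hx k
      nlinarith [mul_pos hzk hxk, mul_pos (mul_pos hzk hxk) h2]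
    have step2 : ∑ k, Z k i * x k * f i ^ (q - 3) = f i ^ (q - 2) := by
      rw [← Finset.sum_mul]
      have hfi_eq : ∑ k, Z k i * x k = f i := by
        rw [hf]
        simp only [Matrix.mulVec, dotProduct]
        exact Finset.sum_congr rfl fun k _ => by rw [hZsym k i]
      rw [hfi_eq, mul_comm, ← Real.rpow_add_one (ne_of_gt hfi) (q - 3)]
      ring_nf
    linarith
  have hE : 0 < f i ^ (q - 2) := Real.rpow_pos_of_pos hfi _
  have h2q : (0:ℝ) < 2 - q := by linarith
  have hMpos : 0 < M i i := by
    rw [hMii]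
    nlinarith [mul_le_mul_of_nonneg_left hsum h2q.le]
  refine ⟨⟨i, hMpos⟩, fun h => ?_⟩
  have h0 := h.diag_nonneg (i := i)
  have hle : (0:ℝ) ≤ -(M i i) := by
    simpa [dotProduct, Matrix.mulVec, Pi.single_apply, Finset.mul_sum,
      Finset.sum_ite_eq, Finset.sum_ite_eq'] using h0
  linarith
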